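/- Let Γ = ℤ^n be a bilinear lattice with an exceptional sequence E = (e_1,…,e_n) satisfying ℤE = Γ, and let C be the matrix with ⟨x,y⟩ = xᵀCy. Then C is invertible, and the automorphism x ↦ −C^{-1}Cᵀx equals s_E = s_{e_1}∘⋯∘s_{e_n} and satisfies ⟨y, c(x)⟩ = −⟨x,y⟩ for all x, y ∈ Γ. -/

import Mathlib

open Matrix

/-- An element `a` is a pseudo-real root if `⟨a,a⟩ > 0` and `⟨a,a⟩` divides
`⟨a,x⟩` and `⟨x,a⟩` for all `x`. -/
def IsPseudoReal {Γ : Type} [AddCommGroup Γ] (B : Γ →ₗ[ℤ] Γ →ₗ[ℤ] ℤ) (a : Γ) : Prop :=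
  0 < B a a ∧ ∀ x : Γ, B a a ∣ B a x ∧ B a a ∣ B x a

/-- Non-degeneracy of the bilinear form. -/
def Nondeg {Γ : Type} [AddCommGroup Γ] (B : Γ →ₗ[ℤ] Γ →ₗ[ℤ] ℤ) : Prop :=
  (∀ x, (∀ y, B x y = 0) → x = 0) ∧ (∀ y, (∀ x, B x y = 0) → y = 0)

/-- The reflection `s_a(x) = x - 2((x,a)/(a,a)) • a`, where `(x,y) = ⟨x,y⟩ + ⟨y,x⟩`. -/
def sRefl {Γ : Type} [AddCommGroup Γ] (B : Γ →ₗ[ℤ] Γ →ₗ[ℤ] ℤ) (a x : Γ) : Γ :=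
  x - ((2 * (B x a + B a x)) / (2 * B a a)) • a

/-- `s_E = s_{e_1} ∘ ⋯ ∘ s_{e_r}` for a list `E = [e_1, …, e_r]`. -/
def sSeq {Γ : Type} [AddCommGroup Γ] (B : Γ →ₗ[ℤ] Γ →ₗ[ℤ] ℤ) (l : List Γ) (x : Γ) : Γ :=
  l.foldr (sRefl B) x

/-- The Coxeter transformation `x ↦ -C⁻¹Cᵀx` (expressed as `C • c(x) = -Cᵀ • x`) equals
the composite of reflections `s_E` for any complete exceptional sequence `E`. -/
lemma sRefl_coeff {Γ : Type} [AddCommGroup Γ] (B : Γ →ₗ[ℤ] Γ →ₗ[ℤ] ℤ) {a : Γ}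
    (h : IsPseudoReal B a) (x : Γ) :
    ((2 * (B x a + B a x)) / (2 * B a a)) * B a a = B x a + B a x := by
  rw [Int.mul_ediv_mul_of_pos _ _ two_pos]
  exact Int.ediv_mul_cancel (dvd_add (h.2 x).2 (h.2 x).1)

lemma B_sRefl_self {Γ : Type} [AddCommGroup Γ] (B : Γ →ₗ[ℤ] Γ →ₗ[ℤ] ℤ) {a : Γ}
    (h : IsPseudoReal B a) (x : Γ) :
    B a (sRefl B a x) = - B x a := by
  unfold sRefl
  rw [map_sub, map_zsmul, smul_eq_mul, sRefl_coeff B h x]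
  ring

lemma sSeq_B_right {Γ : Type} [AddCommGroup Γ] (B : Γ →ₗ[ℤ] Γ →ₗ[ℤ] ℤ) (v : Γ) :
    ∀ l : List Γ, (∀ a ∈ l, B a v = 0) → ∀ x, B (sSeq B l x) v = B x v := by
  intro l
  induction l with
  | nil => intro _ x; rfl
  | cons a l ih =>
    intro h x
    have : sSeq B (a :: l) x = sRefl B a (sSeq B l x) := rfl
    rw [this]
    unfold sRefl
    rw [map_sub, map_zsmul, LinearMap.sub_apply, LinearMap.smul_apply, smul_eq_mul,
      h a (List.mem_cons_self), mul_zero, sub_zero,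
      ih (fun b hb => h b (List.mem_cons_of_mem a hb)) x]

lemma B_sSeq_left {Γ : Type} [AddCommGroup Γ] (B : Γ →ₗ[ℤ] Γ →ₗ[ℤ] ℤ) (u : Γ) :
    ∀ l : List Γ, (∀ a ∈ l, B u a = 0) → ∀ x, B u (sSeq B l x) = B u x := by
  intro l
  induction l with
  | nil => intro _ x; rfl
  | cons a l ih =>
    intro h x
    have : sSeq B (a :: l) x = sRefl B a (sSeq B l x) := rfl
    rw [this]
    unfold sRefl
    rw [map_sub, map_zsmul, smul_eq_mul, h a (List.mem_cons_self), mul_zero, sub_zero,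
      ih (fun b hb => h b (List.mem_cons_of_mem a hb)) x]

lemma key_lemma {n : ℕ} {Γ : Type} [AddCommGroup Γ] (B : Γ →ₗ[ℤ] Γ →ₗ[ℤ] ℤ)
    (e : Fin n → Γ) (hroot : ∀ i, IsPseudoReal B (e i))
    (hexc : ∀ i j : Fin n, j < i → B (e i) (e j) = 0) :
    ∀ L : List (Fin n), L.Pairwise (· < ·) → ∀ i ∈ L, ∀ x,
      B (e i) (sSeq B (L.map e) x) = - B x (e i) := by
  intro L
  induction L with
  | nil => intro _ i hi; exact absurd hi List.not_mem_nil
  | cons j L ih =>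
    intro hp i hi x
    have hstep : sSeq B ((j :: L).map e) x = sRefl B (e j) (sSeq B (L.map e) x) := rfl
    rw [hstep]
    rcases List.mem_cons.mp hi with rfl | hi'
    · -- i = j
      have h1 : B (sSeq B (L.map e) x) (e i) = B x (e i) := by
        apply sSeq_B_right
        intro a ha
        obtain ⟨k, hk, rfl⟩ := List.mem_map.mp ha
        exact hexc k i ((List.pairwise_cons.mp hp).1 k hk)
      rw [B_sRefl_self B (hroot i), h1]
    · -- i ∈ L, j < i
      have hj : j < i := (List.pairwise_cons.mp hp).1 i hi'
      unfold sRefl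
      rw [map_sub, map_zsmul, smul_eq_mul, hexc i j hj, mul_zero, sub_zero]
      exact ih (List.pairwise_cons.mp hp).2 i hi' x

theorem statement4 (n : ℕ) (C : Matrix (Fin n) (Fin n) ℤ)
    (B : (Fin n → ℤ) →ₗ[ℤ] (Fin n → ℤ) →ₗ[ℤ] ℤ)
    (hBC : ∀ x y : Fin n → ℤ, B x y = x ⬝ᵥ C.mulVec y)
    (hB : Nondeg B)
    (e : Fin n → (Fin n → ℤ))
    (hroot : ∀ i, IsPseudoReal B (e i))
    (hexc : ∀ i j : Fin n, j < i → B (e i) (e j) = 0)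
    (hcomplete : Submodule.span ℤ (Set.range e) = ⊤) :
    C.det ≠ 0 ∧
    (∀ x : Fin n → ℤ, C.mulVec (sSeq B (List.ofFn e) x) = -(Cᵀ.mulVec x)) ∧
    (∀ x y : Fin n → ℤ, B y (sSeq B (List.ofFn e) x) = - B x y) := by
  -- the key identity on basis vectors
  have hkey : ∀ i : Fin n, ∀ x, B (e i) (sSeq B (List.ofFn e) x) = - B x (e i) := by
    intro i x
    rw [List.ofFn_eq_map]
    exact key_lemma B e hroot hexc (List.finRange n) (List.pairwise_lt_finRange n)
      i (List.mem_finRange i) x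
  -- extend to all y by linearity
  have hmain : ∀ x y : Fin n → ℤ, B y (sSeq B (List.ofFn e) x) = - B x y := by
    intro x y
    have hφ : (B.flip (sSeq B (List.ofFn e) x) + B x) = (0 : (Fin n → ℤ) →ₗ[ℤ] ℤ) := by
      apply LinearMap.ext_on_range hcomplete
      intro i
      simp only [LinearMap.add_apply, LinearMap.flip_apply, LinearMap.zero_apply]
      rw [hkey i x]; ring
    have := DFunLike.congr_fun hφ y
    simp only [LinearMap.add_apply, LinearMap.flip_apply, LinearMap.zero_apply] at this
    linarith
  refine ⟨?_, ?_, hmain⟩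
  · intro hdet
    obtain ⟨v, hv, hv0⟩ := Matrix.exists_mulVec_eq_zero_iff.mpr hdet
    exact hv (hB.2 v (fun x => by rw [hBC, hv0, dotProduct_zero]))
  · intro x
    funext i
    have h1 := hmain x (Pi.single i 1)
    rw [hBC, hBC] at h1
    simpa [dotProduct, Matrix.mulVec, Finset.mul_sum, mul_comm, mul_left_comm,
      Pi.single_apply] using h1
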